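/- On M = ℝ⁴ ∖ {q₁ = q₂ = 0} restricted to p₁ > 0, with Ω = (1/p₁)(dq₁∧dp₁ + dq₂∧dp₂) and θ = −(1/p₁) dp₁, and Hamiltonian H = ½(p₁² + p₂²) − 1/q₁ − 1/q₂, the vector field X = q₁ ∂_{q₁} + q₂ ∂_{q₂} − (p₁/2) ∂_{p₁} − (p₂/2) ∂_{p₂} satisfies L_X Ω = Ω, L_X θ = 0, and L_X H = −H; i.e., X is a scaling symmetry of degree −1. -/

import Mathlib

/-!
Concrete example on `M = ℝ⁴ ∖ {q₁ = 0, q₂ = 0}` restricted to `p₁ > 0`,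
with coordinates `(q₁, q₂, p₁, p₂) = (x 0, x 1, x 2, x 3)`, LCS
structure `Ω = (1/p₁)(dq₁∧dp₁ + dq₂∧dp₂)`, `θ = −(1/p₁) dp₁` (forms
represented by their pointwise multilinear actions), and Hamiltonian
`H = ½(p₁² + p₂²) − 1/q₁ − 1/q₂`.

The vector field `X = q₁ ∂_{q₁} + q₂ ∂_{q₂} − (p₁/2) ∂_{p₁} − (p₂/2) ∂_{p₂}`
is linear, `X x = S x` with `S u = (u 0, u 1, −u 2/2, −u 3/2)`, so the
Lie derivative of a form `T` along `X` at `x`, evaluated on constant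
vectors, is
`(L_X T) x (u, …) = fderiv (T · (u,…)) x (X x) + Σ T x (… S u …)`.

STATEMENT: `L_X Ω = Ω`, `L_X θ = 0` and `L_X H = −H`; i.e. `X` is a
scaling symmetry of degree `−1` for `(M, Ω, θ, H)`.
-/

noncomputable section

/-- `Ω = (1/p₁)(dq₁∧dp₁ + dq₂∧dp₂)`. -/
def Ω₁₉ (x u v : Fin 4 → ℝ) : ℝ :=
  (1 / x 2) * ((u 0 * v 2 - u 2 * v 0) + (u 1 * v 3 - u 3 * v 1))

/-- `θ = −(1/p₁) dp₁`. -/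
def θ₁₉ (x u : Fin 4 → ℝ) : ℝ := -(1 / x 2) * u 2

/-- `H = ½(p₁² + p₂²) − 1/q₁ − 1/q₂`. -/
def H₁₉ (x : Fin 4 → ℝ) : ℝ :=
  (x 2 ^ 2 + x 3 ^ 2) / 2 - 1 / x 0 - 1 / x 1

/-- The (linear) scaling vector field
`X = q₁ ∂_{q₁} + q₂ ∂_{q₂} − (p₁/2) ∂_{p₁} − (p₂/2) ∂_{p₂}`. -/
def S₁₉ (u : Fin 4 → ℝ) : Fin 4 → ℝ := ![u 0, u 1, -(u 2) / 2, -(u 3) / 2]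

lemma proj_fderiv (x : Fin 4 → ℝ) (i : Fin 4) :
    HasFDerivAt (fun y : Fin 4 → ℝ => y i)
      (ContinuousLinearMap.proj (R := ℝ) (φ := fun _ : Fin 4 => ℝ) i) x :=
  (ContinuousLinearMap.proj (R := ℝ) (φ := fun _ : Fin 4 => ℝ) i).hasFDerivAt

lemma inv_coord_fderiv (x : Fin 4 → ℝ) (i : Fin 4) (h : x i ≠ 0) :
    HasFDerivAt (fun y : Fin 4 → ℝ => (y i)⁻¹)
      ((-(x i ^ 2)⁻¹) • ContinuousLinearMap.proj (R := ℝ) (φ := fun _ : Fin 4 => ℝ) i) x :=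
  (hasDerivAt_inv h).comp_hasFDerivAt x (proj_fderiv x i)

lemma sq_coord_fderiv (x : Fin 4 → ℝ) (i : Fin 4) :
    HasFDerivAt (fun y : Fin 4 → ℝ => y i ^ 2)
      ((2 * x i) • ContinuousLinearMap.proj (R := ℝ) (φ := fun _ : Fin 4 => ℝ) i) x := by
  have := (hasDerivAt_pow 2 (x i)).comp_hasFDerivAt x (proj_fderiv x i)
  simpa [Function.comp_def] using this

theorem scaling_symmetry_degree_neg_one
    (x : Fin 4 → ℝ) (hp : x 2 > 0) (hq₁ : x 0 ≠ 0) (hq₂ : x 1 ≠ 0) :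
    -- L_X Ω = Ω
    (∀ u v : Fin 4 → ℝ,
      fderiv ℝ (fun y => Ω₁₉ y u v) x (S₁₉ x)
        + Ω₁₉ x (S₁₉ u) v + Ω₁₉ x u (S₁₉ v) = Ω₁₉ x u v) ∧
    -- L_X θ = 0
    (∀ u : Fin 4 → ℝ,
      fderiv ℝ (fun y => θ₁₉ y u) x (S₁₉ x) + θ₁₉ x (S₁₉ u) = 0) ∧
    -- L_X H = −H
    fderiv ℝ H₁₉ x (S₁₉ x) = - H₁₉ x := by
  have hp2 : x 2 ≠ 0 := ne_of_gt hp
  have hi2 := inv_coord_fderiv x 2 hp2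
  refine ⟨?_, ?_, ?_⟩
  · intro u v
    set C := (u 0 * v 2 - u 2 * v 0) + (u 1 * v 3 - u 3 * v 1) with hC
    have hfun : (fun y => Ω₁₉ y u v) = fun y : Fin 4 → ℝ => C * (y 2)⁻¹ := by
      funext y; simp only [Ω₁₉, hC]; ring
    have h : HasFDerivAt (fun y => Ω₁₉ y u v)
        (C • ((-(x 2 ^ 2)⁻¹) • ContinuousLinearMap.proj (R := ℝ) (φ := fun _ : Fin 4 => ℝ) 2)) x := by
      rw [hfun]; exact hi2.const_mul C
    rw [h.fderiv]
    simp only [Ω₁₉, S₁₉, ContinuousLinearMap.smul_apply, ContinuousLinearMap.proj_apply,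
      Matrix.cons_val_zero, Matrix.cons_val_one, Matrix.head_cons, Matrix.cons_val_two,
      Matrix.tail_cons, Matrix.cons_val_three, smul_eq_mul, hC]
    field_simp
    ring
  · intro u
    have hfun : (fun y => θ₁₉ y u) = fun y : Fin 4 → ℝ => (-(u 2)) * (y 2)⁻¹ := by
      funext y; simp only [θ₁₉]; ring
    have h : HasFDerivAt (fun y => θ₁₉ y u)
        ((-(u 2)) • ((-(x 2 ^ 2)⁻¹) • ContinuousLinearMap.proj (R := ℝ) (φ := fun _ : Fin 4 => ℝ) 2)) x := by
      rw [hfun]; exact hi2.const_mul (-(u 2))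
    rw [h.fderiv]
    simp only [θ₁₉, S₁₉, ContinuousLinearMap.smul_apply, ContinuousLinearMap.proj_apply,
      Matrix.cons_val_zero, Matrix.cons_val_one, Matrix.head_cons, Matrix.cons_val_two,
      Matrix.tail_cons, Matrix.cons_val_three, smul_eq_mul]
    field_simp
    ring
  · have h2 := sq_coord_fderiv x 2
    have h3 := sq_coord_fderiv x 3
    have h0 := inv_coord_fderiv x 0 hq₁
    have h1 := inv_coord_fderiv x 1 hq₂
    have hfun : H₁₉ = fun y : Fin 4 → ℝ =>
        (1/2 : ℝ) * (y 2 ^ 2 + y 3 ^ 2) - (y 0)⁻¹ - (y 1)⁻¹ := by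
      funext y; simp only [H₁₉]; ring
    have hH : HasFDerivAt H₁₉
        ((1/2 : ℝ) • ((2 * x 2) • ContinuousLinearMap.proj (R := ℝ) (φ := fun _ : Fin 4 => ℝ) 2
            + (2 * x 3) • ContinuousLinearMap.proj (R := ℝ) (φ := fun _ : Fin 4 => ℝ) 3)
          - (-(x 0 ^ 2)⁻¹) • ContinuousLinearMap.proj (R := ℝ) (φ := fun _ : Fin 4 => ℝ) 0
          - (-(x 1 ^ 2)⁻¹) • ContinuousLinearMap.proj (R := ℝ) (φ := fun _ : Fin 4 => ℝ) 1) x := by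
      rw [hfun]
      exact (((h2.add h3).const_mul (1/2 : ℝ)).sub h0).sub h1
    rw [hH.fderiv]
    simp only [H₁₉, S₁₉, ContinuousLinearMap.sub_apply, ContinuousLinearMap.add_apply,
      ContinuousLinearMap.smul_apply, ContinuousLinearMap.proj_apply,
      Matrix.cons_val_zero, Matrix.cons_val_one, Matrix.head_cons, Matrix.cons_val_two,
      Matrix.tail_cons, Matrix.cons_val_three, smul_eq_mul]
    field_simp
    ring

end
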